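/- The set S3 = L ∪ {(x−1, y) : (x,y) ∈ L}, where L = {(x,y) ∈ ℤ×ℤ : x ≡ y (mod 4) and x + 3y ≡ 0 (mod 8)}, is strongly optimal for the infinite hexagonal grid T3: for every vertex v of T3, exactly one vertex of the closed neighborhood N[v] belongs to S3. Consequently the closed neighborhoods N[s], s ∈ S3, partition the vertex set of T3. -/

import Mathlib

/-- The infinite hexagonal grid: vertices `ℤ × ℤ`; `(x,y)` is adjacent to `(x,y+1)` and
`(x,y−1)`, and additionally to `(x+1,y)` when `x+y` is even (equivalently, to `(x−1,y)` when
`x+y` is odd). -/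
def T3 : SimpleGraph (ℤ × ℤ) where
  Adj p q :=
    (p.1 = q.1 ∧ (q.2 = p.2 + 1 ∨ p.2 = q.2 + 1)) ∨
    (p.2 = q.2 ∧ ((Even (p.1 + p.2) ∧ q.1 = p.1 + 1) ∨ (Even (q.1 + q.2) ∧ p.1 = q.1 + 1)))
  symm := by
    constructor
    rintro p q (⟨h1, h2 | h2⟩ | ⟨h1, h2 | h2⟩)
    · exact Or.inl ⟨h1.symm, Or.inr h2⟩
    · exact Or.inl ⟨h1.symm, Or.inl h2⟩
    · exact Or.inr ⟨h1.symm, Or.inr h2⟩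
    · exact Or.inr ⟨h1.symm, Or.inl h2⟩
  loopless := by
    constructor
    rintro p (⟨h1, h2 | h2⟩ | ⟨h1, ⟨_, h2⟩ | ⟨_, h2⟩⟩) <;> omega

/-- The lattice `L = {(x,y) : x ≡ y (mod 4), x + 3y ≡ 0 (mod 8)}` (generated by `(2,2)` and
`(3,−1)`). -/
def L : Set (ℤ × ℤ) := {p | Int.ModEq 4 p.1 p.2 ∧ Int.ModEq 8 (p.1 + 3 * p.2) 0}

/-- `S3 = L ∪ {(x−1, y) : (x,y) ∈ L}`. -/
def S3 : Set (ℤ × ℤ) := L ∪ (fun p : ℤ × ℤ => (p.1 - 1, p.2)) '' L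


/-- The closed neighborhood `N[v]` in `T3`. -/
def closedNbhdT3 (v : ℤ × ℤ) : Set (ℤ × ℤ) := insert v (T3.neighborSet v)

/-- `S3` is strongly optimal for `T3`: every vertex has exactly one vertex of
`S3` in its closed neighborhood; consequently the closed neighborhoods `N[s]`, `s ∈ S3`,
partition the vertex set. -/

lemma T3_adj (p q : ℤ × ℤ) : T3.Adj p q ↔
    ((p.1 = q.1 ∧ (q.2 = p.2 + 1 ∨ p.2 = q.2 + 1)) ∨
    (p.2 = q.2 ∧ ((Even (p.1 + p.2) ∧ q.1 = p.1 + 1) ∨ (Even (q.1 + q.2) ∧ p.1 = q.1 + 1)))) :=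
  Iff.rfl

lemma mem_S3_iff (u : ℤ × ℤ) : u ∈ S3 ↔
    ((u.1 % 4 = u.2 % 4 ∧ (u.1 + 3*u.2) % 8 = 0) ∨
     ((u.1+1) % 4 = u.2 % 4 ∧ (u.1 + 1 + 3*u.2) % 8 = 0)) := by
  simp only [S3, L, Set.mem_union, Set.mem_image, Set.mem_setOf_eq, Int.ModEq]
  constructor
  · rintro (⟨h1, h2⟩ | ⟨p, ⟨h1, h2⟩, hp⟩)
    · left; omega
    · right
      rw [Prod.ext_iff] at hp
      obtain ⟨h3, h4⟩ := hp
      simp only at h3 h4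
      omega
  · rintro (⟨h1, h2⟩ | ⟨h1, h2⟩)
    · left; omega
    · right
      refine ⟨(u.1+1, u.2), ⟨by omega, by omega⟩, ?_⟩
      simp

lemma mem_N_iff (v u : ℤ × ℤ) : u ∈ closedNbhdT3 v ↔
    ((u.1 = v.1 ∧ u.2 = v.2) ∨
     (v.1 = u.1 ∧ (u.2 = v.2 + 1 ∨ v.2 = u.2 + 1)) ∨
     (v.2 = u.2 ∧ (((v.1 + v.2) % 2 = 0 ∧ u.1 = v.1 + 1) ∨ ((u.1 + u.2) % 2 = 0 ∧ v.1 = u.1 + 1)))) := by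
  simp only [closedNbhdT3, Set.mem_insert_iff, SimpleGraph.mem_neighborSet, T3_adj,
    Prod.ext_iff, Int.even_iff]

lemma mem_S3_iff' (a b : ℤ) : (a, b) ∈ S3 ↔
    ((a % 4 = b % 4 ∧ (a + 3*b) % 8 = 0) ∨
     ((a+1) % 4 = b % 4 ∧ (a + 1 + 3*b) % 8 = 0)) := by
  simpa using mem_S3_iff (a, b)

lemma mem_N_iff' (a b c d : ℤ) : (c, d) ∈ closedNbhdT3 (a, b) ↔
    ((c = a ∧ d = b) ∨
     (a = c ∧ (d = b + 1 ∨ b = d + 1)) ∨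
     (b = d ∧ (((a + b) % 2 = 0 ∧ c = a + 1) ∨ ((c + d) % 2 = 0 ∧ a = c + 1)))) := by
  simpa using mem_N_iff (a, b) (c, d)

lemma key (v : ℤ × ℤ) : ∃! u : ℤ × ℤ, u ∈ S3 ∧ u ∈ closedNbhdT3 v := by
  obtain ⟨v1, v2⟩ := v
  have ex : ∃ u : ℤ × ℤ, u ∈ S3 ∧ u ∈ closedNbhdT3 (v1, v2) := by
    have e1 : v1 % 8 = 0 ∨ v1 % 8 = 1 ∨ v1 % 8 = 2 ∨ v1 % 8 = 3 ∨ v1 % 8 = 4 ∨ v1 % 8 = 5 ∨ v1 % 8 = 6 ∨ v1 % 8 = 7 := by omega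
    have e2 : v2 % 8 = 0 ∨ v2 % 8 = 1 ∨ v2 % 8 = 2 ∨ v2 % 8 = 3 ∨ v2 % 8 = 4 ∨ v2 % 8 = 5 ∨ v2 % 8 = 6 ∨ v2 % 8 = 7 := by omega
    rcases e1 with e1|e1|e1|e1|e1|e1|e1|e1 <;> rcases e2 with e2|e2|e2|e2|e2|e2|e2|e2
    · exact ⟨(v1, v2), (mem_S3_iff' _ _).2 (Or.inl ⟨by omega, by omega⟩), (mem_N_iff' _ _ _ _).2 (Or.inl ⟨rfl, rfl⟩)⟩
    · exact ⟨(v1, v2 - 1), (mem_S3_iff' _ _).2 (Or.inl ⟨by omega, by omega⟩), (mem_N_iff' _ _ _ _).2 (Or.inr (Or.inl ⟨rfl, Or.inr (by omega)⟩))⟩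
    · exact ⟨(v1 + 1, v2), (mem_S3_iff' _ _).2 (Or.inr ⟨by omega, by omega⟩), (mem_N_iff' _ _ _ _).2 (Or.inr (Or.inr ⟨rfl, Or.inl ⟨by omega, rfl⟩⟩))⟩
    · exact ⟨(v1 - 1, v2), (mem_S3_iff' _ _).2 (Or.inl ⟨by omega, by omega⟩), (mem_N_iff' _ _ _ _).2 (Or.inr (Or.inr ⟨rfl, Or.inr ⟨by omega, by omega⟩⟩))⟩
    · exact ⟨(v1, v2 + 1), (mem_S3_iff' _ _).2 (Or.inr ⟨by omega, by omega⟩), (mem_N_iff' _ _ _ _).2 (Or.inr (Or.inl ⟨rfl, Or.inl rfl⟩))⟩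
    · exact ⟨(v1, v2), (mem_S3_iff' _ _).2 (Or.inr ⟨by omega, by omega⟩), (mem_N_iff' _ _ _ _).2 (Or.inl ⟨rfl, rfl⟩)⟩
    · exact ⟨(v1, v2 - 1), (mem_S3_iff' _ _).2 (Or.inr ⟨by omega, by omega⟩), (mem_N_iff' _ _ _ _).2 (Or.inr (Or.inl ⟨rfl, Or.inr (by omega)⟩))⟩
    · exact ⟨(v1, v2 + 1), (mem_S3_iff' _ _).2 (Or.inl ⟨by omega, by omega⟩), (mem_N_iff' _ _ _ _).2 (Or.inr (Or.inl ⟨rfl, Or.inl rfl⟩))⟩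
    · exact ⟨(v1 - 1, v2), (mem_S3_iff' _ _).2 (Or.inl ⟨by omega, by omega⟩), (mem_N_iff' _ _ _ _).2 (Or.inr (Or.inr ⟨rfl, Or.inr ⟨by omega, by omega⟩⟩))⟩
    · exact ⟨(v1, v2 + 1), (mem_S3_iff' _ _).2 (Or.inr ⟨by omega, by omega⟩), (mem_N_iff' _ _ _ _).2 (Or.inr (Or.inl ⟨rfl, Or.inl rfl⟩))⟩
    · exact ⟨(v1, v2), (mem_S3_iff' _ _).2 (Or.inr ⟨by omega, by omega⟩), (mem_N_iff' _ _ _ _).2 (Or.inl ⟨rfl, rfl⟩)⟩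
    · exact ⟨(v1, v2 - 1), (mem_S3_iff' _ _).2 (Or.inr ⟨by omega, by omega⟩), (mem_N_iff' _ _ _ _).2 (Or.inr (Or.inl ⟨rfl, Or.inr (by omega)⟩))⟩
    · exact ⟨(v1, v2 + 1), (mem_S3_iff' _ _).2 (Or.inl ⟨by omega, by omega⟩), (mem_N_iff' _ _ _ _).2 (Or.inr (Or.inl ⟨rfl, Or.inl rfl⟩))⟩
    · exact ⟨(v1, v2), (mem_S3_iff' _ _).2 (Or.inl ⟨by omega, by omega⟩), (mem_N_iff' _ _ _ _).2 (Or.inl ⟨rfl, rfl⟩)⟩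
    · exact ⟨(v1, v2 - 1), (mem_S3_iff' _ _).2 (Or.inl ⟨by omega, by omega⟩), (mem_N_iff' _ _ _ _).2 (Or.inr (Or.inl ⟨rfl, Or.inr (by omega)⟩))⟩
    · exact ⟨(v1 + 1, v2), (mem_S3_iff' _ _).2 (Or.inr ⟨by omega, by omega⟩), (mem_N_iff' _ _ _ _).2 (Or.inr (Or.inr ⟨rfl, Or.inl ⟨by omega, rfl⟩⟩))⟩
    · exact ⟨(v1, v2 - 1), (mem_S3_iff' _ _).2 (Or.inr ⟨by omega, by omega⟩), (mem_N_iff' _ _ _ _).2 (Or.inr (Or.inl ⟨rfl, Or.inr (by omega)⟩))⟩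
    · exact ⟨(v1, v2 + 1), (mem_S3_iff' _ _).2 (Or.inl ⟨by omega, by omega⟩), (mem_N_iff' _ _ _ _).2 (Or.inr (Or.inl ⟨rfl, Or.inl rfl⟩))⟩
    · exact ⟨(v1, v2), (mem_S3_iff' _ _).2 (Or.inl ⟨by omega, by omega⟩), (mem_N_iff' _ _ _ _).2 (Or.inl ⟨rfl, rfl⟩)⟩
    · exact ⟨(v1, v2 - 1), (mem_S3_iff' _ _).2 (Or.inl ⟨by omega, by omega⟩), (mem_N_iff' _ _ _ _).2 (Or.inr (Or.inl ⟨rfl, Or.inr (by omega)⟩))⟩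
    · exact ⟨(v1 + 1, v2), (mem_S3_iff' _ _).2 (Or.inr ⟨by omega, by omega⟩), (mem_N_iff' _ _ _ _).2 (Or.inr (Or.inr ⟨rfl, Or.inl ⟨by omega, rfl⟩⟩))⟩
    · exact ⟨(v1 - 1, v2), (mem_S3_iff' _ _).2 (Or.inl ⟨by omega, by omega⟩), (mem_N_iff' _ _ _ _).2 (Or.inr (Or.inr ⟨rfl, Or.inr ⟨by omega, by omega⟩⟩))⟩
    · exact ⟨(v1, v2 + 1), (mem_S3_iff' _ _).2 (Or.inr ⟨by omega, by omega⟩), (mem_N_iff' _ _ _ _).2 (Or.inr (Or.inl ⟨rfl, Or.inl rfl⟩))⟩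
    · exact ⟨(v1, v2), (mem_S3_iff' _ _).2 (Or.inr ⟨by omega, by omega⟩), (mem_N_iff' _ _ _ _).2 (Or.inl ⟨rfl, rfl⟩)⟩
    · exact ⟨(v1, v2 - 1), (mem_S3_iff' _ _).2 (Or.inl ⟨by omega, by omega⟩), (mem_N_iff' _ _ _ _).2 (Or.inr (Or.inl ⟨rfl, Or.inr (by omega)⟩))⟩
    · exact ⟨(v1 + 1, v2), (mem_S3_iff' _ _).2 (Or.inr ⟨by omega, by omega⟩), (mem_N_iff' _ _ _ _).2 (Or.inr (Or.inr ⟨rfl, Or.inl ⟨by omega, rfl⟩⟩))⟩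
    · exact ⟨(v1 - 1, v2), (mem_S3_iff' _ _).2 (Or.inl ⟨by omega, by omega⟩), (mem_N_iff' _ _ _ _).2 (Or.inr (Or.inr ⟨rfl, Or.inr ⟨by omega, by omega⟩⟩))⟩
    · exact ⟨(v1, v2 + 1), (mem_S3_iff' _ _).2 (Or.inr ⟨by omega, by omega⟩), (mem_N_iff' _ _ _ _).2 (Or.inr (Or.inl ⟨rfl, Or.inl rfl⟩))⟩
    · exact ⟨(v1, v2), (mem_S3_iff' _ _).2 (Or.inr ⟨by omega, by omega⟩), (mem_N_iff' _ _ _ _).2 (Or.inl ⟨rfl, rfl⟩)⟩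
    · exact ⟨(v1, v2 - 1), (mem_S3_iff' _ _).2 (Or.inr ⟨by omega, by omega⟩), (mem_N_iff' _ _ _ _).2 (Or.inr (Or.inl ⟨rfl, Or.inr (by omega)⟩))⟩
    · exact ⟨(v1, v2 + 1), (mem_S3_iff' _ _).2 (Or.inl ⟨by omega, by omega⟩), (mem_N_iff' _ _ _ _).2 (Or.inr (Or.inl ⟨rfl, Or.inl rfl⟩))⟩
    · exact ⟨(v1, v2), (mem_S3_iff' _ _).2 (Or.inl ⟨by omega, by omega⟩), (mem_N_iff' _ _ _ _).2 (Or.inl ⟨rfl, rfl⟩)⟩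
    · exact ⟨(v1, v2 + 1), (mem_S3_iff' _ _).2 (Or.inr ⟨by omega, by omega⟩), (mem_N_iff' _ _ _ _).2 (Or.inr (Or.inl ⟨rfl, Or.inl rfl⟩))⟩
    · exact ⟨(v1, v2), (mem_S3_iff' _ _).2 (Or.inr ⟨by omega, by omega⟩), (mem_N_iff' _ _ _ _).2 (Or.inl ⟨rfl, rfl⟩)⟩
    · exact ⟨(v1, v2 - 1), (mem_S3_iff' _ _).2 (Or.inr ⟨by omega, by omega⟩), (mem_N_iff' _ _ _ _).2 (Or.inr (Or.inl ⟨rfl, Or.inr (by omega)⟩))⟩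
    · exact ⟨(v1, v2 + 1), (mem_S3_iff' _ _).2 (Or.inl ⟨by omega, by omega⟩), (mem_N_iff' _ _ _ _).2 (Or.inr (Or.inl ⟨rfl, Or.inl rfl⟩))⟩
    · exact ⟨(v1, v2), (mem_S3_iff' _ _).2 (Or.inl ⟨by omega, by omega⟩), (mem_N_iff' _ _ _ _).2 (Or.inl ⟨rfl, rfl⟩)⟩
    · exact ⟨(v1, v2 - 1), (mem_S3_iff' _ _).2 (Or.inl ⟨by omega, by omega⟩), (mem_N_iff' _ _ _ _).2 (Or.inr (Or.inl ⟨rfl, Or.inr (by omega)⟩))⟩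
    · exact ⟨(v1 + 1, v2), (mem_S3_iff' _ _).2 (Or.inr ⟨by omega, by omega⟩), (mem_N_iff' _ _ _ _).2 (Or.inr (Or.inr ⟨rfl, Or.inl ⟨by omega, rfl⟩⟩))⟩
    · exact ⟨(v1 - 1, v2), (mem_S3_iff' _ _).2 (Or.inl ⟨by omega, by omega⟩), (mem_N_iff' _ _ _ _).2 (Or.inr (Or.inr ⟨rfl, Or.inr ⟨by omega, by omega⟩⟩))⟩
    · exact ⟨(v1, v2 + 1), (mem_S3_iff' _ _).2 (Or.inl ⟨by omega, by omega⟩), (mem_N_iff' _ _ _ _).2 (Or.inr (Or.inl ⟨rfl, Or.inl rfl⟩))⟩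
    · exact ⟨(v1, v2), (mem_S3_iff' _ _).2 (Or.inl ⟨by omega, by omega⟩), (mem_N_iff' _ _ _ _).2 (Or.inl ⟨rfl, rfl⟩)⟩
    · exact ⟨(v1, v2 - 1), (mem_S3_iff' _ _).2 (Or.inl ⟨by omega, by omega⟩), (mem_N_iff' _ _ _ _).2 (Or.inr (Or.inl ⟨rfl, Or.inr (by omega)⟩))⟩
    · exact ⟨(v1 + 1, v2), (mem_S3_iff' _ _).2 (Or.inr ⟨by omega, by omega⟩), (mem_N_iff' _ _ _ _).2 (Or.inr (Or.inr ⟨rfl, Or.inl ⟨by omega, rfl⟩⟩))⟩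
    · exact ⟨(v1 - 1, v2), (mem_S3_iff' _ _).2 (Or.inl ⟨by omega, by omega⟩), (mem_N_iff' _ _ _ _).2 (Or.inr (Or.inr ⟨rfl, Or.inr ⟨by omega, by omega⟩⟩))⟩
    · exact ⟨(v1, v2 + 1), (mem_S3_iff' _ _).2 (Or.inr ⟨by omega, by omega⟩), (mem_N_iff' _ _ _ _).2 (Or.inr (Or.inl ⟨rfl, Or.inl rfl⟩))⟩
    · exact ⟨(v1, v2), (mem_S3_iff' _ _).2 (Or.inr ⟨by omega, by omega⟩), (mem_N_iff' _ _ _ _).2 (Or.inl ⟨rfl, rfl⟩)⟩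
    · exact ⟨(v1, v2 - 1), (mem_S3_iff' _ _).2 (Or.inr ⟨by omega, by omega⟩), (mem_N_iff' _ _ _ _).2 (Or.inr (Or.inl ⟨rfl, Or.inr (by omega)⟩))⟩
    · exact ⟨(v1 + 1, v2), (mem_S3_iff' _ _).2 (Or.inr ⟨by omega, by omega⟩), (mem_N_iff' _ _ _ _).2 (Or.inr (Or.inr ⟨rfl, Or.inl ⟨by omega, rfl⟩⟩))⟩
    · exact ⟨(v1 - 1, v2), (mem_S3_iff' _ _).2 (Or.inl ⟨by omega, by omega⟩), (mem_N_iff' _ _ _ _).2 (Or.inr (Or.inr ⟨rfl, Or.inr ⟨by omega, by omega⟩⟩))⟩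
    · exact ⟨(v1, v2 + 1), (mem_S3_iff' _ _).2 (Or.inr ⟨by omega, by omega⟩), (mem_N_iff' _ _ _ _).2 (Or.inr (Or.inl ⟨rfl, Or.inl rfl⟩))⟩
    · exact ⟨(v1, v2), (mem_S3_iff' _ _).2 (Or.inr ⟨by omega, by omega⟩), (mem_N_iff' _ _ _ _).2 (Or.inl ⟨rfl, rfl⟩)⟩
    · exact ⟨(v1, v2 - 1), (mem_S3_iff' _ _).2 (Or.inr ⟨by omega, by omega⟩), (mem_N_iff' _ _ _ _).2 (Or.inr (Or.inl ⟨rfl, Or.inr (by omega)⟩))⟩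
    · exact ⟨(v1, v2 + 1), (mem_S3_iff' _ _).2 (Or.inl ⟨by omega, by omega⟩), (mem_N_iff' _ _ _ _).2 (Or.inr (Or.inl ⟨rfl, Or.inl rfl⟩))⟩
    · exact ⟨(v1, v2), (mem_S3_iff' _ _).2 (Or.inl ⟨by omega, by omega⟩), (mem_N_iff' _ _ _ _).2 (Or.inl ⟨rfl, rfl⟩)⟩
    · exact ⟨(v1, v2 - 1), (mem_S3_iff' _ _).2 (Or.inl ⟨by omega, by omega⟩), (mem_N_iff' _ _ _ _).2 (Or.inr (Or.inl ⟨rfl, Or.inr (by omega)⟩))⟩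
    · exact ⟨(v1, v2), (mem_S3_iff' _ _).2 (Or.inr ⟨by omega, by omega⟩), (mem_N_iff' _ _ _ _).2 (Or.inl ⟨rfl, rfl⟩)⟩
    · exact ⟨(v1, v2 - 1), (mem_S3_iff' _ _).2 (Or.inr ⟨by omega, by omega⟩), (mem_N_iff' _ _ _ _).2 (Or.inr (Or.inl ⟨rfl, Or.inr (by omega)⟩))⟩
    · exact ⟨(v1, v2 + 1), (mem_S3_iff' _ _).2 (Or.inl ⟨by omega, by omega⟩), (mem_N_iff' _ _ _ _).2 (Or.inr (Or.inl ⟨rfl, Or.inl rfl⟩))⟩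
    · exact ⟨(v1, v2), (mem_S3_iff' _ _).2 (Or.inl ⟨by omega, by omega⟩), (mem_N_iff' _ _ _ _).2 (Or.inl ⟨rfl, rfl⟩)⟩
    · exact ⟨(v1, v2 - 1), (mem_S3_iff' _ _).2 (Or.inl ⟨by omega, by omega⟩), (mem_N_iff' _ _ _ _).2 (Or.inr (Or.inl ⟨rfl, Or.inr (by omega)⟩))⟩
    · exact ⟨(v1 + 1, v2), (mem_S3_iff' _ _).2 (Or.inr ⟨by omega, by omega⟩), (mem_N_iff' _ _ _ _).2 (Or.inr (Or.inr ⟨rfl, Or.inl ⟨by omega, rfl⟩⟩))⟩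
    · exact ⟨(v1 - 1, v2), (mem_S3_iff' _ _).2 (Or.inl ⟨by omega, by omega⟩), (mem_N_iff' _ _ _ _).2 (Or.inr (Or.inr ⟨rfl, Or.inr ⟨by omega, by omega⟩⟩))⟩
    · exact ⟨(v1, v2 + 1), (mem_S3_iff' _ _).2 (Or.inr ⟨by omega, by omega⟩), (mem_N_iff' _ _ _ _).2 (Or.inr (Or.inl ⟨rfl, Or.inl rfl⟩))⟩
  obtain ⟨u, hu⟩ := ex
  refine ⟨u, hu, ?_⟩
  rintro u' ⟨hs', hn'⟩
  obtain ⟨hs, hn⟩ := hu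
  rw [mem_S3_iff] at hs hs'
  rw [mem_N_iff] at hn hn'
  obtain ⟨u1, u2⟩ := u
  obtain ⟨u1', u2'⟩ := u'
  simp only [Prod.mk.injEq] at *
  omega

lemma N_symm (u v : ℤ × ℤ) : u ∈ closedNbhdT3 v ↔ v ∈ closedNbhdT3 u := by
  rw [mem_N_iff, mem_N_iff]; omega

theorem stmt_9 :
    (∀ v : ℤ × ℤ, ∃! u : ℤ × ℤ, u ∈ S3 ∧ u ∈ closedNbhdT3 v) ∧
    (⋃ s ∈ S3, closedNbhdT3 s) = Set.univ ∧
    S3.PairwiseDisjoint closedNbhdT3 := by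
  refine ⟨key, ?_, ?_⟩
  · ext v
    simp only [Set.mem_iUnion, Set.mem_univ, iff_true]
    obtain ⟨u, ⟨hu1, hu2⟩, -⟩ := key v
    exact ⟨u, hu1, (N_symm v u).2 hu2⟩
  · rintro s hs t ht hst
    rw [Function.onFun, Set.disjoint_left]
    rintro v hvs hvt
    obtain ⟨u, -, huniq⟩ := key v
    exact hst (((huniq s ⟨hs, (N_symm s v).2 hvs⟩).trans (huniq t ⟨ht, (N_symm t v).2 hvt⟩).symm) ▸ rfl)
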